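/- Let 0 < β, λ ≤ 1 with λ + β > 1, and let 0 ≤ a < b. Let g : [a,b] → ℝ be β-Hölder continuous and f : [a,b] → ℝ be λ-Hölder continuous. Then there is a constant C depending only on β and λ such that the Young integral satisfies |∫_a^b f dg| ≤ C ‖g‖_{a,b,β} ( ‖f‖_{a,b} (b−a)^β + ‖f‖_{a,b,λ} (b−a)^{λ+β} ); in particular, the indefinite Young integral t ↦ ∫_a^t f dg satisfies ‖∫_a^· f dg‖_{a,b,β} ≤ C ‖g‖_{a,b,β} ( ‖f‖_{a,b} + ‖f‖_{a,b,λ}(b−a)^λ ). -/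

import Mathlib

open Set MeasureTheory Filter

noncomputable def supNorm {B : Type*} [NormedAddCommGroup B] (x : ℝ → B) (a b : ℝ) : ℝ :=
  ⨆ t : Icc a b, ‖x t‖

noncomputable def holderNorm {B : Type*} [NormedAddCommGroup B] (x : ℝ → B) (a b β : ℝ) : ℝ :=
  ⨆ q : {q : ℝ × ℝ // a ≤ q.1 ∧ q.1 < q.2 ∧ q.2 ≤ b},
    ‖x q.1.2 - x q.1.1‖ / (q.1.2 - q.1.1) ^ β

def HolderOn {B : Type*} [NormedAddCommGroup B] (f : ℝ → B) (a b lam : ℝ) : Prop :=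
  ∃ C : ℝ, ∀ s ∈ Icc a b, ∀ t ∈ Icc a b, ‖f t - f s‖ ≤ C * |t - s| ^ lam

def IsYoungIntegral {B : Type*} [NormedAddCommGroup B] [NormedSpace ℝ B]
    (f : ℝ → B) (g : ℝ → ℝ) (a b : ℝ) (I : B) : Prop :=
  ∀ ε > 0, ∃ δ > 0, ∀ (n : ℕ) (t : ℕ → ℝ),
    t 0 = a → t n = b → (∀ i < n, t i < t (i + 1)) → (∀ i < n, t (i + 1) - t i < δ) →
    ‖(∑ i ∈ Finset.range n, (g (t (i + 1)) - g (t i)) • f (t i)) - I‖ < ε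

open Classical in
noncomputable def youngIntegral {B : Type*} [NormedAddCommGroup B] [NormedSpace ℝ B]
    (f : ℝ → B) (g : ℝ → ℝ) (a b : ℝ) : B :=
  if h : ∃ I, IsYoungIntegral f g a b I then h.choose else 0

open Finset

lemma part_mono {n : ℕ} {t : ℕ → ℝ} (ht : ∀ i < n, t i < t (i+1)) :
    ∀ i j, i < j → j ≤ n → t i < t j := by
  intro i j
  induction j with
  | zero => omega
  | succ m ih =>
    intro hij hjn
    rcases Nat.lt_or_ge i m with h | h
    · exact (ih h (by omega)).trans (ht m (by omega))
    · have : i = m := by omega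
      subst this; exact ht i (by omega)

lemma part_mono_le {n : ℕ} {t : ℕ → ℝ} (ht : ∀ i < n, t i < t (i+1)) :
    ∀ i j, i ≤ j → j ≤ n → t i ≤ t j := by
  intro i j hij hjn
  rcases eq_or_lt_of_le hij with h | h
  · subst h; rfl
  · exact (part_mono ht i j h hjn).le

lemma sum_remove (a a' : ℕ → ℝ) (n k : ℕ) (hk1 : 1 ≤ k) (hkn : k ≤ n)
    (h1 : ∀ i < k - 1, a' i = a i) (h2 : ∀ i, k ≤ i → i < n → a' i = a (i+1)) :
    ∑ i ∈ range (n+1), a i - ∑ i ∈ range n, a' i = a (k-1) + a k - a' (k-1) := by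
  obtain ⟨k, rfl⟩ : ∃ k', k = k' + 1 := ⟨k - 1, by omega⟩
  have e1 : ∑ i ∈ range (n+1), a i
      = ∑ i ∈ range k, a i + (a k + a (k+1)) + ∑ i ∈ Ico (k+2) (n+1), a i := by
    rw [range_eq_Ico, ← Finset.sum_Ico_consecutive a (Nat.zero_le (k+2)) (by omega : k+2 ≤ n+1),
      ← Finset.sum_Ico_consecutive a (Nat.zero_le k) (by omega : k ≤ k+2), ← range_eq_Ico]
    have : ∑ i ∈ Ico k (k+2), a i = a k + a (k+1) := by
      rw [show k + 2 = (k+1)+1 by ring, Finset.sum_Ico_succ_top (by omega),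
        Nat.Ico_succ_singleton, Finset.sum_singleton]
    rw [this]
  have e2 : ∑ i ∈ range n, a' i
      = ∑ i ∈ range k, a i + a' k + ∑ i ∈ Ico (k+2) (n+1), a i := by
    rw [range_eq_Ico, ← Finset.sum_Ico_consecutive a' (Nat.zero_le (k+1)) (by omega : k+1 ≤ n),
      ← Finset.sum_Ico_consecutive a' (Nat.zero_le k) (by omega : k ≤ k+1), ← range_eq_Ico]
    congr 1
    · congr 1
      · exact Finset.sum_congr rfl fun i hi => h1 i (by simpa using hi)
      · rw [Nat.Ico_succ_singleton, Finset.sum_singleton]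
    · rw [show ∑ i ∈ Ico (k+1) n, a' i = ∑ i ∈ Ico (k+1) n, a (i+1) from
        Finset.sum_congr rfl fun i hi => h2 i (by simp at hi; omega) (by simp at hi; omega)]
      rw [Finset.sum_Ico_eq_sum_range, Finset.sum_Ico_eq_sum_range]
      rw [show n + 1 - (k+2) = n - (k+1) by omega]
      exact Finset.sum_congr rfl fun i _ => by congr 1; omega
  rw [e1, e2]
  simp only [Nat.add_sub_cancel]
  ring

lemma keyA (f g : ℝ → ℝ) (lam β Kf Kg A B : ℝ) (hβ0 : 0 < β) (hlam0 : 0 < lam)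
    (hKf : 0 ≤ Kf) (hKg : 0 ≤ Kg)
    (hf : ∀ s ∈ Icc A B, ∀ u ∈ Icc A B, s ≤ u → |f u - f s| ≤ Kf * (u - s) ^ lam)
    (hg : ∀ s ∈ Icc A B, ∀ u ∈ Icc A B, s ≤ u → |g u - g s| ≤ Kg * (u - s) ^ β) :
    ∀ n, 1 ≤ n → ∀ t : ℕ → ℝ, (∀ i < n, t i < t (i+1)) → (∀ i ≤ n, t i ∈ Icc A B) →
    |∑ i ∈ range n, (g (t (i+1)) - g (t i)) * f (t i) - (g (t n) - g (t 0)) * f (t 0)|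
      ≤ Kf * Kg * ∑ k ∈ Finset.Icc 1 (n-1), (2*(t n - t 0)/k) ^ (lam+β) := by
  intro n
  induction n using Nat.strong_induction_on with
  | _ n IH =>
  intro hn t htlt htm
  match n, hn with
  | 1, _ =>
    simp only [Finset.sum_range_one]
    norm_num
  | (m+2), _ =>
    set D := t (m+2) - t 0 with hD
    have hDpos : 0 < D := sub_pos.2 (part_mono htlt 0 (m+2) (by omega) le_rfl)
    -- find a removable point
    have htel : ∑ k ∈ Finset.Icc 1 (m+1), (t (k+1) - t (k-1)) ≤ (m+1) * (2*D/(m+1)) := by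
      have hm1 : ((m:ℝ)+1) ≠ 0 := by positivity
      have : ((m:ℝ)+1) * (2*D/(m+1)) = 2*D := by field_simp
      rw [this]
      have e : ∑ k ∈ Finset.Icc 1 (m+1), (t (k+1) - t (k-1))
          = ∑ j ∈ range (m+1), (t (j+2) - t j) := by
        rw [← Finset.Ico_add_one_right_eq_Icc, Finset.sum_Ico_eq_sum_range]
        rw [show m + 1 + 1 - 1 = m + 1 by omega]
        exact Finset.sum_congr rfl fun j _ => by congr 2 <;> omega
      rw [e]
      have e2 : ∀ j ∈ range (m+1), t (j+2) - t j = (t (j+2) - t (j+1)) + (t (j+1) - t j) := by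
        intro j _; ring
      rw [Finset.sum_congr rfl e2, Finset.sum_add_distrib]
      have T1 : ∑ j ∈ range (m+1), (t (j+2) - t (j+1)) = t (m+2) - t 1 :=
        Finset.sum_range_sub (fun j => t (j+1)) (m+1)
      have T2 : ∑ j ∈ range (m+1), (t (j+1) - t j) = t (m+1) - t 0 :=
        Finset.sum_range_sub t (m+1)
      rw [T1, T2]
      have h1 : t 0 ≤ t 1 := part_mono_le htlt 0 1 (by omega) (by omega)
      have h2 : t (m+1) ≤ t (m+2) := part_mono_le htlt (m+1) (m+2) (by omega) le_rfl
      simp only [hD]; linarith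
    have hconst : ∑ _k ∈ Finset.Icc 1 (m+1), (2*D/((m:ℝ)+1)) = (m+1) * (2*D/(m+1)) := by
      rw [Finset.sum_const, Nat.card_Icc, nsmul_eq_mul]
      congr 1
      push_cast [show m + 1 + 1 - 1 = m + 1 by omega]
      ring
    obtain ⟨k, hkmem, hk3⟩ := Finset.exists_le_of_sum_le
      (f := fun k : ℕ => t (k+1) - t (k-1)) (g := fun _ => 2*D/((m:ℝ)+1))
      (Finset.nonempty_Icc.2 (by omega : 1 ≤ m+1)) (htel.trans_eq hconst.symm)
    have hk1 : 1 ≤ k := (Finset.mem_Icc.1 hkmem).1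
    have hk2 : k ≤ m + 1 := (Finset.mem_Icc.1 hkmem).2
    set t' : ℕ → ℝ := fun i => if i < k then t i else t (i+1) with ht'
    have ht'0 : t' 0 = t 0 := by simp only [ht']; rw [if_pos (by omega)]
    have ht'n : t' (m+1) = t (m+2) := by
      simp only [ht']; rw [if_neg (by omega)]
    have ht'lt : ∀ i < m+1, t' i < t' (i+1) := by
      intro i hi
      simp only [ht']
      rcases Nat.lt_or_ge (i+1) k with h | h
      · rw [if_pos (by omega), if_pos h]; exact htlt i (by omega)
      rcases Nat.lt_or_ge i k with h' | h'
      · rw [if_pos h', if_neg (by omega)]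
        exact part_mono htlt i (i+2) (by omega) (by omega)
      · rw [if_neg (by omega), if_neg (by omega)]
        exact htlt (i+1) (by omega)
    have ht'm : ∀ i ≤ m+1, t' i ∈ Icc A B := by
      intro i hi
      simp only [ht']
      split
      · exact htm i (by omega)
      · exact htm (i+1) (by omega)
    -- the removed increment
    set Δ := t (k+1) - t (k-1) with hΔ
    have hΔpos : 0 < Δ := sub_pos.2 (part_mono htlt (k-1) (k+1) (by omega) (by omega))
    have hgap1 : t (k+1) - t k ≤ Δ := by
      have := part_mono_le htlt (k-1) k (by omega) (by omega); simp only [hΔ]; linarith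
    have hgap2 : t k - t (k-1) ≤ Δ := by
      have := part_mono_le htlt k (k+1) (by omega) (by omega); simp only [hΔ]; linarith
    have hrem : |(g (t (k+1)) - g (t k)) * (f (t k) - f (t (k-1)))|
        ≤ Kf * Kg * (2*D/(m+1)) ^ (lam+β) := by
      rw [abs_mul]
      have b1 : |g (t (k+1)) - g (t k)| ≤ Kg * Δ ^ β := by
        refine le_trans (hg _ (htm k (by omega)) _ (htm (k+1) (by omega))
          (part_mono_le htlt k (k+1) (by omega) (by omega))) ?_
        exact mul_le_mul_of_nonneg_left
          (Real.rpow_le_rpow (by linarith [part_mono_le htlt k (k+1) (by omega : k ≤ k+1) (by omega)]) hgap1 hβ0.le) hKg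
      have b2 : |f (t k) - f (t (k-1))| ≤ Kf * Δ ^ lam := by
        refine le_trans (hf _ (htm (k-1) (by omega)) _ (htm k (by omega))
          (part_mono_le htlt (k-1) k (by omega) (by omega))) ?_
        exact mul_le_mul_of_nonneg_left
          (Real.rpow_le_rpow (by linarith [part_mono_le htlt (k-1) k (by omega : k-1 ≤ k) (by omega)]) hgap2 hlam0.le) hKf
      have := mul_le_mul b1 b2 (abs_nonneg _) (by positivity)
      refine le_trans this ?_
      have e : Kg * Δ ^ β * (Kf * Δ ^ lam) = Kf * Kg * Δ ^ (lam+β) := by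
        rw [Real.rpow_add hΔpos]; ring
      rw [e]
      refine mul_le_mul_of_nonneg_left ?_ (by positivity)
      exact Real.rpow_le_rpow hΔpos.le hk3 (by positivity)
    -- sum identity
    set a : ℕ → ℝ := fun i => (g (t (i+1)) - g (t i)) * f (t i) with ha
    set a' : ℕ → ℝ := fun i => (g (t' (i+1)) - g (t' i)) * f (t' i) with ha'
    have hdiff : ∑ i ∈ range (m+2), a i - ∑ i ∈ range (m+1), a' i
        = (g (t (k+1)) - g (t k)) * (f (t k) - f (t (k-1))) := by
      have := sum_remove a a' (m+1) k hk1 hk2 ?_ ?_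
      · rw [this]
        have e1 : a' (k-1) = (g (t (k+1)) - g (t (k-1))) * f (t (k-1)) := by
          simp only [ha', ht']
          rw [show k - 1 + 1 = k by omega, if_neg (by omega), if_pos (by omega)]
        have e2 : a (k-1) = (g (t k) - g (t (k-1))) * f (t (k-1)) := by
          simp only [ha]; rw [show k - 1 + 1 = k by omega]
        rw [e1, e2, ha]; ring
      · intro i hi
        simp only [ha, ha', ht']
        rw [if_pos (by omega), if_pos (by omega)]
      · intro i hi1 hi2
        simp only [ha, ha', ht']
        rw [if_neg (by omega), if_neg (by omega)]
    -- IH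
    have hIH := IH (m+1) (by omega) (by omega) t' ht'lt ht'm
    rw [ht'0, ht'n] at hIH
    have final : |∑ i ∈ range (m+2), a i - (g (t (m+2)) - g (t 0)) * f (t 0)|
        ≤ Kf * Kg * (2*D/(m+1)) ^ (lam+β)
          + Kf * Kg * ∑ j ∈ Finset.Icc 1 m, (2*D/j) ^ (lam+β) := by
      have tri : |∑ i ∈ range (m+2), a i - (g (t (m+2)) - g (t 0)) * f (t 0)|
          ≤ |∑ i ∈ range (m+2), a i - ∑ i ∈ range (m+1), a' i|
            + |∑ i ∈ range (m+1), a' i - (g (t (m+2)) - g (t 0)) * f (t 0)| := by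
        have := abs_sub_le (∑ i ∈ range (m+2), a i) (∑ i ∈ range (m+1), a' i)
          ((g (t (m+2)) - g (t 0)) * f (t 0))
        exact this
      refine le_trans tri (add_le_add ?_ ?_)
      · rw [hdiff]; exact hrem
      · simpa using hIH
    refine le_trans final ?_
    rw [show (m+2) - 1 = m + 1 by omega,
      Finset.sum_Icc_succ_top (by omega : 1 ≤ m+1)]
    push_cast
    rw [mul_add]
    linarith

noncomputable def Zp (p : ℝ) : ℝ := ∑' k : ℕ, 1 / (k:ℝ) ^ p
noncomputable def CC (p : ℝ) : ℝ := 2 ^ p * Zp p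

lemma Zp_nonneg (p : ℝ) : 0 ≤ Zp p := tsum_nonneg fun k => by positivity
lemma CC_nonneg (p : ℝ) : 0 ≤ CC p :=
  mul_nonneg (Real.rpow_nonneg (by norm_num) _) (Zp_nonneg p)

lemma sum_pow_le (p : ℝ) (hp : 1 < p) (D : ℝ) (hD : 0 ≤ D) (n : ℕ) :
    ∑ k ∈ Finset.Icc 1 n, (2*D/(k:ℝ)) ^ p ≤ CC p * D ^ p := by
  have hsummable : Summable (fun k : ℕ => 1 / (k:ℝ) ^ p) := Real.summable_one_div_nat_rpow.2 hp
  have e : ∀ k ∈ Finset.Icc 1 n, (2*D/(k:ℝ)) ^ p = (2*D) ^ p * (1 / (k:ℝ) ^ p) := by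
    intro k hk
    rw [Real.div_rpow (by linarith) (Nat.cast_nonneg k)]
    ring
  rw [Finset.sum_congr rfl e, ← Finset.mul_sum]
  have h1 : ∑ k ∈ Finset.Icc 1 n, (1 / (k:ℝ) ^ p) ≤ Zp p :=
    hsummable.sum_le_tsum _ (fun k _ => by positivity)
  have h2 : ((2*D) ^ p : ℝ) = 2 ^ p * D ^ p := Real.mul_rpow (by norm_num) hD
  calc (2*D)^p * ∑ k ∈ Finset.Icc 1 n, (1 / (k:ℝ) ^ p)
      ≤ (2*D)^p * Zp p :=
        mul_le_mul_of_nonneg_left h1 (Real.rpow_nonneg (by linarith) p)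
    _ = CC p * D ^ p := by simp only [CC]; rw [h2]; ring

lemma keyA2 (f g : ℝ → ℝ) (lam β Kf Kg A B : ℝ) (hβ0 : 0 < β) (hlam0 : 0 < lam)
    (hsum : 1 < lam + β) (hKf : 0 ≤ Kf) (hKg : 0 ≤ Kg)
    (hf : ∀ s ∈ Icc A B, ∀ u ∈ Icc A B, s ≤ u → |f u - f s| ≤ Kf * (u - s) ^ lam)
    (hg : ∀ s ∈ Icc A B, ∀ u ∈ Icc A B, s ≤ u → |g u - g s| ≤ Kg * (u - s) ^ β)
    (n : ℕ) (hn : 1 ≤ n) (t : ℕ → ℝ) (htlt : ∀ i < n, t i < t (i+1))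
    (htm : ∀ i ≤ n, t i ∈ Icc A B) :
    |∑ i ∈ range n, (g (t (i+1)) - g (t i)) * f (t i) - (g (t n) - g (t 0)) * f (t 0)|
      ≤ CC (lam+β) * Kf * Kg * (t n - t 0) ^ (lam+β) := by
  refine le_trans (keyA f g lam β Kf Kg A B hβ0 hlam0 hKf hKg hf hg n hn t htlt htm) ?_
  have hD : 0 ≤ t n - t 0 := sub_nonneg.2 (part_mono_le htlt 0 n (Nat.zero_le n) le_rfl)
  calc Kf * Kg * ∑ k ∈ Finset.Icc 1 (n-1), (2*(t n - t 0)/(k:ℝ)) ^ (lam+β)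
      ≤ Kf * Kg * (CC (lam+β) * (t n - t 0) ^ (lam+β)) :=
        mul_le_mul_of_nonneg_left (sum_pow_le _ hsum _ hD _) (by positivity)
    _ = CC (lam+β) * Kf * Kg * (t n - t 0) ^ (lam+β) := by ring

def RS (f g : ℝ → ℝ) : List ℝ → ℝ
  | x :: y :: rest => (g y - g x) * f x + RS f g (y :: rest)
  | _ => 0

@[simp] lemma RS_nil (f g : ℝ → ℝ) : RS f g [] = 0 := rfl
@[simp] lemma RS_single (f g : ℝ → ℝ) (x : ℝ) : RS f g [x] = 0 := rfl
@[simp] lemma RS_cons_cons (f g : ℝ → ℝ) (x y : ℝ) (l : List ℝ) :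
    RS f g (x :: y :: l) = (g y - g x) * f x + RS f g (y :: l) := rfl

lemma RS_append_cons (f g : ℝ → ℝ) (xs : List ℝ) (y : ℝ) (ys : List ℝ) :
    RS f g (xs ++ y :: ys) = RS f g (xs ++ [y]) + RS f g (y :: ys) := by
  induction xs with
  | nil => simp
  | cons x xs ih =>
    cases xs with
    | nil => simp [RS]
    | cons x' xs' => simp only [List.cons_append, RS_cons_cons] at *; rw [ih]; ring

lemma RS_eq_sum (f g : ℝ → ℝ) : ∀ l : List ℝ,
    RS f g l = ∑ i ∈ range (l.length - 1),
      (g (l.getD (i+1) 0) - g (l.getD i 0)) * f (l.getD i 0) := by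
  intro l
  induction l with
  | nil => simp
  | cons x l ih =>
    cases l with
    | nil => simp
    | cons y r =>
      rw [RS_cons_cons, ih]
      have hlen : (x :: y :: r).length - 1 = ((y :: r).length - 1) + 1 := by
        simp
      rw [hlen, Finset.sum_range_succ']
      simp only [List.getD_cons_succ, List.getD_cons_zero]
      ring

lemma sorted_eq_singleton {L : List ℝ} {x : ℝ} (hL : L.Pairwise (· < ·))
    (h1 : L.head? = some x) (h2 : L.getLast? = some x) : L = [x] := by
  match L, h1 with
  | x' :: rest, h1 =>
    have hx' : x' = x := by simpa using h1
    cases rest with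
    | nil => rw [hx']
    | cons b r =>
      exfalso
      have hne : (b :: r) ≠ [] := by simp
      have hlast : ((x' :: b :: r).getLast?) = some ((b :: r).getLast hne) := by
        rw [List.getLast?_cons_cons, List.getLast?_eq_getLast]
      rw [h2] at hlast
      have hmem : (b :: r).getLast hne ∈ b :: r := List.getLast_mem hne
      have := List.rel_of_pairwise_cons hL hmem
      have e1 : x = (b :: r).getLast hne := Option.some_inj.1 hlast
      rw [hx', ← e1] at this
      exact lt_irrefl x this

lemma dropWhile_head_eq {L : List ℝ} {y : ℝ} (hL : L.Pairwise (· < ·)) (hy : y ∈ L) :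
    (L.dropWhile (fun z => decide (z < y))).head? = some y := by
  induction L with
  | nil => simp at hy
  | cons c cs ih =>
    rw [List.dropWhile_cons]
    by_cases h : c < y
    · rw [if_pos (by simpa using h)]
      have hycs : y ∈ cs := by
        rcases List.mem_cons.1 hy with h' | h'
        · exact absurd h (by rw [h']; exact lt_irrefl c)
        · exact h'
      exact ih hL.of_cons hycs
    · rw [if_neg (by simpa using h)]
      have : y = c := by
        rcases List.mem_cons.1 hy with h' | h'
        · exact h'
        · exact absurd (List.rel_of_pairwise_cons hL h') h
      simp [this]

lemma keyAList (f g : ℝ → ℝ) (lam β Kf Kg A B : ℝ) (hβ0 : 0 < β) (hlam0 : 0 < lam)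
    (hsum : 1 < lam + β) (hKf : 0 ≤ Kf) (hKg : 0 ≤ Kg)
    (hf : ∀ s ∈ Icc A B, ∀ u ∈ Icc A B, s ≤ u → |f u - f s| ≤ Kf * (u - s) ^ lam)
    (hg : ∀ s ∈ Icc A B, ∀ u ∈ Icc A B, s ≤ u → |g u - g s| ≤ Kg * (u - s) ^ β)
    (l : List ℝ) (x y : ℝ) (hl : l.Chain' (· < ·))
    (hmem : ∀ z ∈ l, z ∈ Icc A B) (hx : l.head? = some x) (hy : l.getLast? = some y) :
    |RS f g l - (g y - g x) * f x| ≤ CC (lam+β) * Kf * Kg * (y - x) ^ (lam+β) := by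
  cases l with
  | nil => simp at hx
  | cons x0 rest =>
  have hx0 : x0 = x := by simpa using hx
  subst hx0
  cases rest with
  | nil =>
    have hyx : x0 = y := by simpa using hy
    subst hyx
    simp [Real.zero_rpow (by positivity : lam + β ≠ 0)]
  | cons b r =>
    set l : List ℝ := x0 :: b :: r with hldef
    set n : ℕ := l.length - 1 with hn
    set t : ℕ → ℝ := fun i => l.getD i 0 with ht
    have hlen : l.length = r.length + 2 := by simp [hldef]
    have hn1 : 1 ≤ n := by omega
    have hget : ∀ i (h : i < l.length), t i = l[i] := fun i h => List.getD_eq_getElem l 0 h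
    have htlt : ∀ i < n, t i < t (i+1) := by
      intro i hi
      have h1 : i < l.length := by omega
      have h2 : i + 1 < l.length := by omega
      rw [hget i h1, hget (i+1) h2]
      exact List.isChain_iff_getElem.1 hl i (by omega)
    have htm : ∀ i ≤ n, t i ∈ Icc A B := by
      intro i hi
      have h1 : i < l.length := by omega
      rw [hget i h1]
      exact hmem _ (l.getElem_mem h1)
    have ht0 : t 0 = x0 := by simp [ht, hldef]
    have hne : l ≠ [] := by simp [hldef]
    have htn : t n = y := by
      have hsome : l.getLast? = some (l.getLast hne) := List.getLast?_eq_getLast hne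
      rw [hy] at hsome
      have e : y = l.getLast hne := Option.some_inj.1 hsome
      have h1 : n < l.length := by omega
      rw [hget n h1, e, List.getLast_eq_getElem]
    have hmain := keyA2 f g lam β Kf Kg A B hβ0 hlam0 hsum hKf hKg hf hg n hn1 t htlt htm
    rw [ht0, htn] at hmain
    simp only [ht, hn] at hmain
    rw [RS_eq_sum f g l]
    exact hmain

lemma keyB (f g : ℝ → ℝ) (lam β Kf Kg A B δ : ℝ) (hβ0 : 0 < β) (hlam0 : 0 < lam)
    (hsum : 1 < lam + β) (hKf : 0 ≤ Kf) (hKg : 0 ≤ Kg)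
    (hf : ∀ s ∈ Icc A B, ∀ u ∈ Icc A B, s ≤ u → |f u - f s| ≤ Kf * (u - s) ^ lam)
    (hg : ∀ s ∈ Icc A B, ∀ u ∈ Icc A B, s ≤ u → |g u - g s| ≤ Kg * (u - s) ^ β) :
    ∀ l L : List ℝ, ∀ x y : ℝ, l.Pairwise (· < ·) → L.Pairwise (· < ·) →
      L.head? = l.head? → L.getLast? = l.getLast? → (∀ z ∈ l, z ∈ L) →
      (∀ z ∈ L, z ∈ Icc A B) → l.Chain' (fun u v => v - u ≤ δ) →
      l.head? = some x → l.getLast? = some y →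
      |RS f g L - RS f g l| ≤ CC (lam+β) * Kf * Kg * δ ^ (lam+β-1) * (y - x) := by
  intro l
  induction l with
  | nil => intro L x y _ _ _ _ _ _ _ hx _; simp at hx
  | cons x0 l' ih =>
    intro L x y hl hL hhead hlast hsub hIcc hchain hx hy
    have hx0 : x0 = x := by simpa using hx
    subst hx0
    cases l' with
    | nil =>
      have hyx : x0 = y := by simpa using hy
      subst hyx
      have hL1 : L = [x0] := sorted_eq_singleton hL (hhead.trans hx) (hlast.trans hy)
      subst hL1
      simp
    | cons y' rest =>
      set pred : ℝ → Bool := fun z => decide (z < y') with hpred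
      have hy'L : y' ∈ L := hsub y' (by simp)
      have hdrop : (L.dropWhile pred).head? = some y' := dropWhile_head_eq hL hy'L
      obtain ⟨Bx, hBx⟩ : ∃ Bx, L.dropWhile pred = y' :: Bx := by
        cases hD : L.dropWhile pred with
        | nil => rw [hD] at hdrop; simp at hdrop
        | cons c cs =>
          rw [hD] at hdrop
          simp only [List.head?_cons, Option.some_inj] at hdrop
          exact ⟨cs, by rw [hdrop]⟩
      set Ax := L.takeWhile pred with hAxdef
      have hLdecomp : L = Ax ++ y' :: Bx := by
        rw [hAxdef, ← hBx, List.takeWhile_append_dropWhile]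
      have hxy' : x0 < y' := List.rel_of_pairwise_cons hl (by simp)
      -- Ax is nonempty with head x0
      obtain ⟨As, hAs⟩ : ∃ As, Ax = x0 :: As := by
        cases hA : Ax with
        | nil =>
          exfalso
          rw [hA] at hLdecomp
          rw [hLdecomp] at hhead
          simp only [List.nil_append, List.head?_cons, Option.some_inj] at hhead
          have : y' = x0 := by simpa using hhead
          exact absurd hxy' (by rw [this]; exact lt_irrefl _)
        | cons a0 As =>
          rw [hA] at hLdecomp
          rw [hLdecomp] at hhead
          simp only [List.cons_append, List.head?_cons, Option.some_inj] at hhead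
          exact ⟨As, by rw [hhead]⟩
      -- the prefix partition of [x0, y']
      have hsubA : (Ax ++ [y']).Sublist L := by
        rw [hLdecomp, show Ax ++ y' :: Bx = (Ax ++ [y']) ++ Bx by simp]
        exact List.sublist_append_left _ _
      have hsortA : (Ax ++ [y']).Pairwise (· < ·) := hL.sublist hsubA
      have hmemA : ∀ z ∈ Ax ++ [y'], z ∈ Icc A B := fun z hz => hIcc z (hsubA.subset hz)
      have hheadA : (Ax ++ [y']).head? = some x0 := by rw [hAs]; rfl
      have hlastA : (Ax ++ [y']).getLast? = some y' := List.getLast?_concat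
      have est1 := keyAList f g lam β Kf Kg A B hβ0 hlam0 hsum hKf hKg hf hg
        (Ax ++ [y']) x0 y' (List.isChain_iff_pairwise.2 hsortA) hmemA hheadA hlastA
      -- the suffix
      have hsubB : (y' :: Bx).Sublist L := by
        rw [hLdecomp]; exact List.sublist_append_right _ _
      have hsortB : (y' :: Bx).Pairwise (· < ·) := hL.sublist hsubB
      have hlastB : (y' :: Bx).getLast? = (y' :: rest).getLast? := by
        have h1 : L.getLast? = (y' :: Bx).getLast? := by
          rw [hLdecomp, List.getLast?_append]
          rw [List.getLast?_eq_getLast (l := y' :: Bx) (by simp)]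
          rfl
        have h2 : (x0 :: y' :: rest).getLast? = (y' :: rest).getLast? :=
          List.getLast?_cons_cons
        rw [← h1, hlast, h2]
      have hsubB2 : ∀ z ∈ y' :: rest, z ∈ y' :: Bx := by
        intro z hz
        rcases List.mem_cons.1 hz with h' | h'
        · rw [h']; simp
        · have hz' : y' < z := List.rel_of_pairwise_cons hl.of_cons h'
          have hzL : z ∈ L := hsub z (by simp [h'])
          rw [hLdecomp] at hzL
          rcases List.mem_append.1 hzL with h'' | h''
          · exfalso
            have := List.mem_takeWhile_imp (by rw [← hAxdef]; exact h'')
            have : z < y' := by simpa [hpred] using this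
            exact absurd hz' (by linarith)
          · exact h''
      have hIccB : ∀ z ∈ y' :: Bx, z ∈ Icc A B := fun z hz => hIcc z (hsubB.subset hz)
      have est2 := ih (y' :: Bx) y' y hl.of_cons hsortB rfl hlastB hsubB2 hIccB
        (List.IsChain.tail hchain) rfl (by rw [← List.getLast?_cons_cons (a := x0)]; exact hy)
      -- combine
      have hRSL : RS f g L = RS f g (Ax ++ [y']) + RS f g (y' :: Bx) := by
        rw [hLdecomp, RS_append_cons]
      have hRSl : RS f g (x0 :: y' :: rest) = (g y' - g x0) * f x0 + RS f g (y' :: rest) :=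
        RS_cons_cons f g x0 y' rest
      have hgap : y' - x0 ≤ δ := (List.isChain_cons_cons.1 hchain).1
      have hconv : (y' - x0) ^ (lam+β) ≤ δ ^ (lam+β-1) * (y' - x0) := by
        have hpos : (0:ℝ) < y' - x0 := by linarith
        have e : (y' - x0) ^ (lam+β) = (y' - x0) ^ (lam+β-1) * (y' - x0) := by
          rw [Real.rpow_sub hpos, Real.rpow_one]
          field_simp
        rw [e]
        exact mul_le_mul_of_nonneg_right
          (Real.rpow_le_rpow hpos.le hgap (by linarith)) hpos.le
      have hCnn : 0 ≤ CC (lam+β) * Kf * Kg :=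
        mul_nonneg (mul_nonneg (CC_nonneg _) hKf) hKg
      have tri : |RS f g L - RS f g (x0 :: y' :: rest)|
          ≤ |RS f g (Ax ++ [y']) - (g y' - g x0) * f x0|
            + |RS f g (y' :: Bx) - RS f g (y' :: rest)| := by
        rw [hRSL, hRSl]
        have e : RS f g (Ax ++ [y']) + RS f g (y' :: Bx)
            - ((g y' - g x0) * f x0 + RS f g (y' :: rest))
            = (RS f g (Ax ++ [y']) - (g y' - g x0) * f x0)
              + (RS f g (y' :: Bx) - RS f g (y' :: rest)) := by ring
        rw [e]
        exact abs_add_le _ _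
      refine le_trans tri ?_
      have b1 : |RS f g (Ax ++ [y']) - (g y' - g x0) * f x0|
          ≤ CC (lam+β) * Kf * Kg * (δ ^ (lam+β-1) * (y' - x0)) :=
        le_trans est1 (mul_le_mul_of_nonneg_left hconv hCnn)
      calc |RS f g (Ax ++ [y']) - (g y' - g x0) * f x0|
            + |RS f g (y' :: Bx) - RS f g (y' :: rest)|
          ≤ CC (lam+β) * Kf * Kg * (δ ^ (lam+β-1) * (y' - x0))
            + CC (lam+β) * Kf * Kg * δ ^ (lam+β-1) * (y - y') := add_le_add b1 est2
        _ = CC (lam+β) * Kf * Kg * δ ^ (lam+β-1) * (y - x0) := by ring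

lemma head?_of_min {L : List ℝ} {u : ℝ} (hL : L.Pairwise (· < ·)) (hu : u ∈ L)
    (hmin : ∀ z ∈ L, u ≤ z) : L.head? = some u := by
  cases L with
  | nil => simp at hu
  | cons c cs =>
    have hc : u ≤ c := hmin c (by simp)
    rcases List.mem_cons.1 hu with h | h
    · simp [h]
    · exact absurd (List.rel_of_pairwise_cons hL h) (by linarith)

lemma getLast?_of_max {L : List ℝ} {v : ℝ} (hL : L.Pairwise (· < ·)) (hv : v ∈ L)
    (hmax : ∀ z ∈ L, z ≤ v) : L.getLast? = some v := by
  induction L with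
  | nil => simp at hv
  | cons c cs ih =>
    cases cs with
    | nil =>
      have : v = c := by simpa using hv
      simp [this]
    | cons d ds =>
      rw [List.getLast?_cons_cons]
      have hvcs : v ∈ d :: ds := by
        rcases List.mem_cons.1 hv with h | h
        · exfalso
          have hd : c < d := List.rel_of_pairwise_cons hL (by simp)
          have : d ≤ v := hmax d (by simp)
          rw [h] at this
          linarith
        · exact h
      exact ih hL.of_cons hvcs (fun z hz => hmax z (by simp [hz]))

lemma merged_props (l1 l2 : List ℝ) :
    ∃ L : List ℝ, L.Pairwise (· < ·) ∧ (∀ z, z ∈ L ↔ (z ∈ l1 ∨ z ∈ l2)) := by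
  classical
  refine ⟨((l1 ++ l2).mergeSort (fun a b => decide (a ≤ b))).dedup, ?_, ?_⟩
  · have hs : ((l1 ++ l2).mergeSort (fun a b => decide (a ≤ b))).Pairwise (· ≤ ·) := by
      have h := List.pairwise_mergeSort (le := fun a b : ℝ => decide (a ≤ b))
        (by intro a b c hab hbc; simp only [decide_eq_true_eq] at *; linarith)
        (by intro a b; simpa using le_total a b) (l1 ++ l2)
      exact h.imp (fun h' => by simpa using h')
    have hle : (((l1 ++ l2).mergeSort (fun a b => decide (a ≤ b))).dedup).Pairwise (· ≤ ·) :=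
      List.Pairwise.sublist (List.dedup_sublist _) hs
    have hnd : (((l1 ++ l2).mergeSort (fun a b => decide (a ≤ b))).dedup).Pairwise (· ≠ ·) :=
      List.nodup_dedup _
    exact (hle.and hnd).imp (fun h' => lt_of_le_of_ne h'.1 h'.2)
  · intro z
    rw [List.mem_dedup, List.mem_mergeSort, List.mem_append]

lemma getD_map_range (t : ℕ → ℝ) (n i : ℕ) (h : i < n+1) :
    (List.map t (List.range (n+1))).getD i 0 = t i := by
  rw [List.getD_eq_getElem _ _ (by simpa using h)]
  simp

lemma RS_map (f g : ℝ → ℝ) (t : ℕ → ℝ) (n : ℕ) :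
    RS f g (List.map t (List.range (n+1)))
      = ∑ i ∈ Finset.range n, (g (t (i+1)) - g (t i)) * f (t i) := by
  rw [RS_eq_sum]
  simp only [List.length_map, List.length_range, Nat.add_sub_cancel]
  refine Finset.sum_congr rfl ?_
  intro i hi
  simp only [Finset.mem_range] at hi
  rw [getD_map_range t n i (by omega), getD_map_range t n (i+1) (by omega)]

lemma part_list_props (t : ℕ → ℝ) (n : ℕ) (htlt : ∀ i < n, t i < t (i+1)) :
    (List.map t (List.range (n+1))).Pairwise (· < ·)
    ∧ (List.map t (List.range (n+1))).head? = some (t 0)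
    ∧ (List.map t (List.range (n+1))).getLast? = some (t n) := by
  refine ⟨?_, ?_, ?_⟩
  · rw [← List.isChain_iff_pairwise, List.isChain_map]
    exact (List.isChain_range_succ _ n).2 htlt
  · simp [List.range_succ_eq_map]
  · rw [List.range_succ, List.map_append]
    exact List.getLast?_concat

lemma gap_chain (t : ℕ → ℝ) (n : ℕ) (δ : ℝ) (h : ∀ i < n, t (i+1) - t i ≤ δ) :
    (List.map t (List.range (n+1))).Chain' (fun a b => b - a ≤ δ) := by
  show List.IsChain _ _
  rw [List.isChain_map]
  exact (List.isChain_range_succ _ n).2 h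

lemma cmp_parts (f g : ℝ → ℝ) (lam β Kf Kg A B u v δ1 δ2 : ℝ)
    (hβ0 : 0 < β) (hlam0 : 0 < lam) (hsum : 1 < lam + β) (hKf : 0 ≤ Kf) (hKg : 0 ≤ Kg)
    (hf : ∀ s ∈ Icc A B, ∀ w ∈ Icc A B, s ≤ w → |f w - f s| ≤ Kf * (w - s) ^ lam)
    (hg : ∀ s ∈ Icc A B, ∀ w ∈ Icc A B, s ≤ w → |g w - g s| ≤ Kg * (w - s) ^ β)
    (hA : A ≤ u) (hB : v ≤ B) (huv : u < v)
    (n1 n2 : ℕ) (hn1 : 1 ≤ n1) (hn2 : 1 ≤ n2) (t1 t2 : ℕ → ℝ)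
    (h1lt : ∀ i < n1, t1 i < t1 (i+1)) (h2lt : ∀ i < n2, t2 i < t2 (i+1))
    (h10 : t1 0 = u) (h1n : t1 n1 = v) (h20 : t2 0 = u) (h2n : t2 n2 = v)
    (h1δ : ∀ i < n1, t1 (i+1) - t1 i ≤ δ1) (h2δ : ∀ i < n2, t2 (i+1) - t2 i ≤ δ2) :
    |∑ i ∈ range n1, (g (t1 (i+1)) - g (t1 i)) * f (t1 i)
      - ∑ i ∈ range n2, (g (t2 (i+1)) - g (t2 i)) * f (t2 i)|
      ≤ CC (lam+β) * Kf * Kg * (δ1 ^ (lam+β-1) + δ2 ^ (lam+β-1)) * (v - u) := by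
  set l1 := List.map t1 (List.range (n1+1)) with hl1
  set l2 := List.map t2 (List.range (n2+1)) with hl2
  obtain ⟨L, hLsort, hLmem⟩ := merged_props l1 l2
  obtain ⟨h1sort, h1head, h1last⟩ := part_list_props t1 n1 h1lt
  obtain ⟨h2sort, h2head, h2last⟩ := part_list_props t2 n2 h2lt
  have hIccuv : ∀ z ∈ L, z ∈ Icc u v := by
    intro z hz
    rcases (hLmem z).1 hz with h | h
    · rw [hl1] at h
      simp only [List.mem_map, List.mem_range] at h
      obtain ⟨i, hi, rfl⟩ := h
      constructor
      · rw [← h10]; exact part_mono_le h1lt 0 i (Nat.zero_le i) (by omega)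
      · rw [← h1n]; exact part_mono_le h1lt i n1 (by omega) le_rfl
    · rw [hl2] at h
      simp only [List.mem_map, List.mem_range] at h
      obtain ⟨i, hi, rfl⟩ := h
      constructor
      · rw [← h20]; exact part_mono_le h2lt 0 i (Nat.zero_le i) (by omega)
      · rw [← h2n]; exact part_mono_le h2lt i n2 (by omega) le_rfl
  have hIccAB : ∀ z ∈ L, z ∈ Icc A B := by
    intro z hz
    obtain ⟨hz1, hz2⟩ := hIccuv z hz
    exact ⟨by linarith, by linarith⟩
  have huL : u ∈ L := (hLmem u).2 (Or.inl (by rw [hl1, ← h10]; simp [List.mem_map]; exact ⟨0, by omega, rfl⟩))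
  have hvL : v ∈ L := (hLmem v).2 (Or.inl (by rw [hl1, ← h1n]; simp [List.mem_map]; exact ⟨n1, by omega, rfl⟩))
  have hLhead : L.head? = some u :=
    head?_of_min hLsort huL (fun z hz => (hIccuv z hz).1)
  have hLlast : L.getLast? = some v :=
    getLast?_of_max hLsort hvL (fun z hz => (hIccuv z hz).2)
  have hres1 := keyB f g lam β Kf Kg A B δ1 hβ0 hlam0 hsum hKf hKg hf hg
    l1 L u v h1sort hLsort (by rw [hLhead, h1head, h10]) (by rw [hLlast, h1last, h1n])
    (fun z hz => (hLmem z).2 (Or.inl hz)) hIccAB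
    (by rw [hl1]; exact gap_chain t1 n1 δ1 h1δ)
    (by rw [h1head, h10]) (by rw [h1last, h1n])
  have hres2 := keyB f g lam β Kf Kg A B δ2 hβ0 hlam0 hsum hKf hKg hf hg
    l2 L u v h2sort hLsort (by rw [hLhead, h2head, h20]) (by rw [hLlast, h2last, h2n])
    (fun z hz => (hLmem z).2 (Or.inr hz)) hIccAB
    (by rw [hl2]; exact gap_chain t2 n2 δ2 h2δ)
    (by rw [h2head, h20]) (by rw [h2last, h2n])
  rw [hl1, RS_map] at hres1
  rw [hl2, RS_map] at hres2
  set S1 := ∑ i ∈ range n1, (g (t1 (i+1)) - g (t1 i)) * f (t1 i)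
  set S2 := ∑ i ∈ range n2, (g (t2 (i+1)) - g (t2 i)) * f (t2 i)
  calc |S1 - S2| ≤ |RS f g L - S1| + |RS f g L - S2| := by
        rw [show S1 - S2 = -((RS f g L - S1) - (RS f g L - S2)) by ring, abs_neg]
        exact abs_sub _ _
    _ ≤ CC (lam+β) * Kf * Kg * δ1 ^ (lam+β-1) * (v - u)
        + CC (lam+β) * Kf * Kg * δ2 ^ (lam+β-1) * (v - u) := add_le_add hres1 hres2
    _ = CC (lam+β) * Kf * Kg * (δ1 ^ (lam+β-1) + δ2 ^ (lam+β-1)) * (v - u) := by ring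

noncomputable def UP (u v : ℝ) (m : ℕ) : ℕ → ℝ := fun i => u + i * ((v - u)/(m+1))

lemma UP_zero (u v : ℝ) (m : ℕ) : UP u v m 0 = u := by simp [UP]

lemma UP_top (u v : ℝ) (m : ℕ) : UP u v m (m+1) = v := by
  have h : ((m:ℝ)+1) ≠ 0 := by positivity
  simp only [UP]
  push_cast
  field_simp
  ring

lemma UP_gap (u v : ℝ) (m : ℕ) (i : ℕ) : UP u v m (i+1) - UP u v m i = (v-u)/(m+1) := by
  simp only [UP]
  push_cast
  ring

lemma UP_lt (u v : ℝ) (m : ℕ) (huv : u < v) : ∀ i < m+1, UP u v m i < UP u v m (i+1) := by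
  intro i _
  have h : 0 < (v-u)/((m:ℝ)+1) := div_pos (by linarith) (by positivity)
  have h2 := UP_gap u v m i
  linarith

lemma exists_mesh (u v δ : ℝ) (hδ : 0 < δ) (huv : u < v) : ∃ m : ℕ, (v-u)/((m:ℝ)+1) < δ := by
  obtain ⟨m, hm⟩ := exists_nat_gt ((v-u)/δ)
  refine ⟨m, ?_⟩
  rw [div_lt_iff₀ (by positivity)]
  rw [div_lt_iff₀ hδ] at hm
  nlinarith [hδ.le]

lemma existsYoung (f g : ℝ → ℝ) (lam β Kf Kg A B : ℝ)
    (hβ0 : 0 < β) (hlam0 : 0 < lam) (hsum : 1 < lam + β) (hKf : 0 ≤ Kf) (hKg : 0 ≤ Kg)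
    (hf : ∀ s ∈ Icc A B, ∀ w ∈ Icc A B, s ≤ w → |f w - f s| ≤ Kf * (w - s) ^ lam)
    (hg : ∀ s ∈ Icc A B, ∀ w ∈ Icc A B, s ≤ w → |g w - g s| ≤ Kg * (w - s) ^ β)
    (u v : ℝ) (huv : u < v) (hA : A ≤ u) (hB : v ≤ B) :
    ∃ I : ℝ, IsYoungIntegral f g u v I := by
  set S : ℕ → ℝ := fun m => ∑ i ∈ Finset.range (m+1),
    (g (UP u v m (i+1)) - g (UP u v m i)) * f (UP u v m i) with hS
  have hCK : 0 ≤ CC (lam+β) * Kf * Kg := mul_nonneg (mul_nonneg (CC_nonneg _) hKf) hKg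
  set E := 2 * (CC (lam+β) * Kf * Kg) * (v - u) with hE
  have hEnn : 0 ≤ E := by
    rw [hE]; apply mul_nonneg (by linarith) (by linarith)
  set b : ℕ → ℝ := fun N => E * ((v-u)/((N:ℝ)+1)) ^ (lam+β-1) with hb
  have hmesh_le : ∀ N n : ℕ, N ≤ n → (v-u)/((n:ℝ)+1) ≤ (v-u)/((N:ℝ)+1) := by
    intro N n h
    apply div_le_div_of_nonneg_left (by linarith) (by positivity)
    have : (N:ℝ) ≤ (n:ℝ) := Nat.cast_le.2 h
    linarith
  have hcmp0 : ∀ n m N : ℕ, N ≤ n → N ≤ m → |S n - S m| ≤ b N := by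
    intro n m N hn hm
    have hc := cmp_parts f g lam β Kf Kg A B u v ((v-u)/((N:ℝ)+1)) ((v-u)/((N:ℝ)+1))
      hβ0 hlam0 hsum hKf hKg hf hg hA hB huv (n+1) (m+1) (by omega) (by omega)
      (UP u v n) (UP u v m) (UP_lt u v n huv) (UP_lt u v m huv)
      (UP_zero u v n) (UP_top u v n) (UP_zero u v m) (UP_top u v m)
      (by intro i _; rw [UP_gap]; exact hmesh_le N n hn)
      (by intro i _; rw [UP_gap]; exact hmesh_le N m hm)
    refine le_trans hc (le_of_eq ?_)
    rw [hb, hE]; ring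
  have htend : Tendsto b atTop (nhds 0) := by
    have h1 : Tendsto (fun N : ℕ => (v-u)/((N:ℝ)+1)) atTop (nhds 0) := by
      have h2 := tendsto_one_div_add_atTop_nhds_zero_nat.const_mul (v-u)
      simpa [mul_one_div, div_eq_mul_inv] using h2
    have h3 : Tendsto (fun x : ℝ => x ^ (lam+β-1)) (nhds 0) (nhds 0) := by
      have h4 := (Real.continuousAt_rpow_const 0 (lam+β-1) (Or.inr (by linarith))).tendsto
      rwa [Real.zero_rpow (by linarith : lam+β-1 ≠ 0)] at h4
    have h5 := (h3.comp h1).const_mul E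
    simpa [hb, Function.comp] using h5
  have hC : CauchySeq S := cauchySeq_of_le_tendsto_0 b
    (by intro n m N h1 h2; rw [Real.dist_eq]; exact hcmp0 n m N h1 h2) htend
  obtain ⟨I, hI⟩ := cauchySeq_tendsto_of_complete hC
  refine ⟨I, ?_⟩
  intro ε hε
  set δ0 := min 1 ((ε/(2*(E+1))) ^ (1/(lam+β-1))) with hδ0
  have hδ0pos : 0 < δ0 := lt_min one_pos (Real.rpow_pos_of_pos (by positivity) _)
  have hδ0E : E * δ0 ^ (lam+β-1) < ε/2 := by
    have h5 : δ0 ^ (lam+β-1) ≤ ε/(2*(E+1)) := by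
      calc δ0 ^ (lam+β-1) ≤ ((ε/(2*(E+1))) ^ (1/(lam+β-1))) ^ (lam+β-1) :=
            Real.rpow_le_rpow hδ0pos.le (min_le_right _ _) (by linarith)
        _ = ε/(2*(E+1)) := by
            rw [← Real.rpow_mul (by positivity), one_div_mul_cancel (by linarith : lam+β-1 ≠ 0),
              Real.rpow_one]
    calc E * δ0 ^ (lam+β-1) ≤ E * (ε/(2*(E+1))) := mul_le_mul_of_nonneg_left h5 hEnn
      _ < ε/2 := by
          rw [show E * (ε/(2*(E+1))) = ε/2 * (E/(E+1)) by field_simp]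
          have hlt : E/(E+1) < 1 := (div_lt_one (by linarith)).2 (by linarith)
          calc ε/2 * (E/(E+1)) < ε/2 * 1 := by
                apply mul_lt_mul_of_pos_left hlt (by linarith)
            _ = ε/2 := mul_one _
  rw [Metric.tendsto_atTop] at hI
  obtain ⟨m1, hm1⟩ := hI (ε/2) (by linarith)
  obtain ⟨m2, hm2⟩ := exists_mesh u v δ0 hδ0pos huv
  set m := max m1 m2 with hm
  have hmesh : (v-u)/((m:ℝ)+1) ≤ δ0 := by
    refine le_trans (hmesh_le m2 m (le_max_right _ _)) hm2.le
  have hSmI : |S m - I| < ε/2 := by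
    have := hm1 m (le_max_left _ _)
    rwa [Real.dist_eq] at this
  refine ⟨δ0, hδ0pos, ?_⟩
  intro n t ht0 htn htlt htδ
  have hn : 1 ≤ n := by
    rcases Nat.eq_zero_or_pos n with h | h
    · exfalso; rw [h] at htn; rw [htn] at ht0; exact absurd ht0.symm (ne_of_lt huv)
    · omega
  simp only [smul_eq_mul, Real.norm_eq_abs]
  have hcmp := cmp_parts f g lam β Kf Kg A B u v δ0 δ0
    hβ0 hlam0 hsum hKf hKg hf hg hA hB huv n (m+1) hn (by omega)
    t (UP u v m) htlt (UP_lt u v m huv) ht0 htn (UP_zero u v m) (UP_top u v m)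
    (by intro i hi; exact (htδ i hi).le)
    (by intro i _; rw [UP_gap]; exact hmesh)
  have hEeq : CC (lam+β) * Kf * Kg * (δ0 ^ (lam+β-1) + δ0 ^ (lam+β-1)) * (v - u)
      = E * δ0 ^ (lam+β-1) := by rw [hE]; ring
  rw [hEeq] at hcmp
  have tri := abs_sub_le (∑ i ∈ Finset.range n, (g (t (i+1)) - g (t i)) * f (t i)) (S m) I
  calc |∑ i ∈ Finset.range n, (g (t (i+1)) - g (t i)) * f (t i) - I|
      ≤ |∑ i ∈ Finset.range n, (g (t (i+1)) - g (t i)) * f (t i) - S m| + |S m - I| := tri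
    _ < E * δ0 ^ (lam+β-1) + ε/2 := by
        apply add_lt_add_of_le_of_lt _ hSmI
        exact hcmp
    _ < ε/2 + ε/2 := by linarith
    _ = ε := by ring

lemma youngBound (f g : ℝ → ℝ) (lam β Kf Kg A B : ℝ)
    (hβ0 : 0 < β) (hlam0 : 0 < lam) (hsum : 1 < lam + β) (hKf : 0 ≤ Kf) (hKg : 0 ≤ Kg)
    (hf : ∀ s ∈ Icc A B, ∀ w ∈ Icc A B, s ≤ w → |f w - f s| ≤ Kf * (w - s) ^ lam)
    (hg : ∀ s ∈ Icc A B, ∀ w ∈ Icc A B, s ≤ w → |g w - g s| ≤ Kg * (w - s) ^ β)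
    (u v I : ℝ) (huv : u < v) (hA : A ≤ u) (hB : v ≤ B)
    (hI : IsYoungIntegral f g u v I) :
    |I - (g v - g u) * f u| ≤ CC (lam+β) * Kf * Kg * (v-u) ^ (lam+β) := by
  refine le_of_forall_pos_le_add ?_
  intro ε hε
  obtain ⟨δ, hδ, hpart⟩ := hI ε hε
  obtain ⟨m, hm⟩ := exists_mesh u v δ hδ huv
  have hUPmem : ∀ i ≤ m+1, UP u v m i ∈ Icc A B := by
    intro i hi
    constructor
    · have := part_mono_le (UP_lt u v m huv) 0 i (Nat.zero_le i) (by omega)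
      rw [UP_zero] at this; linarith
    · have := part_mono_le (UP_lt u v m huv) i (m+1) (by omega) le_rfl
      rw [UP_top] at this; linarith
  have h1 := hpart (m+1) (UP u v m) (UP_zero u v m) (UP_top u v m) (UP_lt u v m huv)
    (by intro i _; rw [UP_gap]; exact hm)
  simp only [smul_eq_mul, Real.norm_eq_abs] at h1
  have h2 := keyA2 f g lam β Kf Kg A B hβ0 hlam0 hsum hKf hKg hf hg
    (m+1) (by omega) (UP u v m) (UP_lt u v m huv) hUPmem
  rw [UP_zero, UP_top] at h2
  have tri := abs_sub_le I (∑ i ∈ Finset.range (m+1),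
    (g (UP u v m (i+1)) - g (UP u v m i)) * f (UP u v m i)) ((g v - g u) * f u)
  rw [abs_sub_comm] at h1
  linarith

lemma young_unique (f g : ℝ → ℝ) {u v I J : ℝ} (huv : u < v)
    (hI : IsYoungIntegral f g u v I) (hJ : IsYoungIntegral f g u v J) : I = J := by
  by_contra hne
  have hpos : 0 < |I - J| := abs_pos.2 (sub_ne_zero.2 hne)
  obtain ⟨δ1, hδ1, h1⟩ := hI (|I-J|/2) (by linarith)
  obtain ⟨δ2, hδ2, h2⟩ := hJ (|I-J|/2) (by linarith)
  obtain ⟨m, hm⟩ := exists_mesh u v (min δ1 δ2) (lt_min hδ1 hδ2) huv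
  have e1 := h1 (m+1) (UP u v m) (UP_zero u v m) (UP_top u v m) (UP_lt u v m huv)
    (by intro i _; rw [UP_gap]; exact hm.trans_le (min_le_left _ _))
  have e2 := h2 (m+1) (UP u v m) (UP_zero u v m) (UP_top u v m) (UP_lt u v m huv)
    (by intro i _; rw [UP_gap]; exact hm.trans_le (min_le_right _ _))
  simp only [smul_eq_mul, Real.norm_eq_abs] at e1 e2
  set X := ∑ i ∈ Finset.range (m+1), (g (UP u v m (i+1)) - g (UP u v m i)) * f (UP u v m i)
  have : |I - J| ≤ |X - I| + |X - J| := by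
    rw [show I - J = (X - J) - (X - I) by ring]
    exact (abs_sub _ _).trans_eq (by rw [add_comm])
  linarith

lemma youngIntegral_isYoung (f g : ℝ → ℝ) (u v : ℝ)
    (hex : ∃ I : ℝ, IsYoungIntegral f g u v I) :
    IsYoungIntegral f g u v (youngIntegral f g u v) := by
  rw [youngIntegral, dif_pos hex]
  exact hex.choose_spec

lemma isYoung_self_zero (f g : ℝ → ℝ) (a : ℝ) (I : ℝ) (hI : IsYoungIntegral f g a a I) :
    I = 0 := by
  by_contra hne
  obtain ⟨δ, hδ, h⟩ := hI |I| (abs_pos.2 hne)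
  have := h 0 (fun _ => a) rfl rfl (by omega) (by omega)
  simp only [Finset.range_zero, Finset.sum_empty, zero_sub, norm_neg, Real.norm_eq_abs] at this
  exact lt_irrefl _ this

lemma isYoung_self (f g : ℝ → ℝ) (a : ℝ) : IsYoungIntegral f g a a 0 := by
  intro ε hε
  refine ⟨1, one_pos, ?_⟩
  intro n t ht0 htn htlt htδ
  have hn0 : n = 0 := by
    by_contra h
    have := part_mono htlt 0 n (by omega) le_rfl
    rw [ht0, htn] at this
    exact lt_irrefl a this
  subst hn0
  simpa using hε

lemma youngIntegral_self (f g : ℝ → ℝ) (a : ℝ) : youngIntegral f g a a = 0 :=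
  isYoung_self_zero f g a _ (youngIntegral_isYoung f g a a ⟨0, isYoung_self f g a⟩)

lemma concat_sum (f g : ℝ → ℝ) (p q r : ℕ → ℝ) (n1 n2 : ℕ) (hglue : p n1 = q 0)
    (hr1 : ∀ i ≤ n1, r i = p i) (hr2 : ∀ j, 1 ≤ j → j ≤ n2 → r (n1 + j) = q j) :
    ∑ i ∈ Finset.range (n1+n2), (g (r (i+1)) - g (r i)) * f (r i)
      = ∑ i ∈ Finset.range n1, (g (p (i+1)) - g (p i)) * f (p i)
        + ∑ i ∈ Finset.range n2, (g (q (i+1)) - g (q i)) * f (q i) := by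
  rw [Finset.sum_range_add]
  congr 1
  · refine Finset.sum_congr rfl ?_
    intro i hi
    simp only [Finset.mem_range] at hi
    rw [hr1 i (by omega), hr1 (i+1) (by omega)]
  · refine Finset.sum_congr rfl ?_
    intro j hj
    simp only [Finset.mem_range] at hj
    have e1 : r (n1 + j) = q j := by
      rcases Nat.eq_zero_or_pos j with h0 | h0
      · subst h0; rw [Nat.add_zero, hr1 n1 le_rfl, hglue]
      · exact hr2 j h0 (by omega)
    have e2 : r (n1 + j + 1) = q (j+1) := by
      rw [show n1 + j + 1 = n1 + (j+1) by ring]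
      exact hr2 (j+1) (by omega) (by omega)
    rw [e1, e2]

lemma young_incr (f g : ℝ → ℝ) (lam β Kf Kg A B : ℝ)
    (hβ0 : 0 < β) (hlam0 : 0 < lam) (hsum : 1 < lam + β) (hKf : 0 ≤ Kf) (hKg : 0 ≤ Kg)
    (hf : ∀ s ∈ Icc A B, ∀ w ∈ Icc A B, s ≤ w → |f w - f s| ≤ Kf * (w - s) ^ lam)
    (hg : ∀ s ∈ Icc A B, ∀ w ∈ Icc A B, s ≤ w → |g w - g s| ≤ Kg * (w - s) ^ β)
    (a s t : ℝ) (has : a < s) (hst : s < t) (hA : A ≤ a) (hB : t ≤ B)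
    (Is It : ℝ) (hIs : IsYoungIntegral f g a s Is) (hIt : IsYoungIntegral f g a t It) :
    |It - Is - (g t - g s) * f s| ≤ CC (lam+β) * Kf * Kg * (t - s) ^ (lam+β) := by
  refine le_of_forall_pos_le_add ?_
  intro ε hε
  obtain ⟨δ1, hδ1, h1⟩ := hIs (ε/2) (by linarith)
  obtain ⟨δ2, hδ2, h2⟩ := hIt (ε/2) (by linarith)
  obtain ⟨m1, hm1⟩ := exists_mesh a s (min δ1 δ2) (lt_min hδ1 hδ2) has
  obtain ⟨m2, hm2⟩ := exists_mesh s t (min δ1 δ2) (lt_min hδ1 hδ2) hst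
  set P := UP a s m1 with hP
  set Q := UP s t m2 with hQ
  set n1 := m1 + 1 with hn1
  set n2 := m2 + 1 with hn2
  set r : ℕ → ℝ := fun i => if i < n1 then P i else Q (i - n1) with hr
  have hglue : P n1 = Q 0 := by rw [hP, hQ, hn1, UP_top, UP_zero]
  have hr1 : ∀ i ≤ n1, r i = P i := by
    intro i hi
    rcases Nat.lt_or_ge i n1 with h | h
    · simp only [hr]; rw [if_pos h]
    · have hin : i = n1 := by omega
      subst hin
      simp only [hr]
      rw [if_neg (by omega), Nat.sub_self, ← hglue]
  have hr2 : ∀ j, 1 ≤ j → j ≤ n2 → r (n1 + j) = Q j := by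
    intro j hj1 hj2
    simp only [hr]
    rw [if_neg (by omega), Nat.add_sub_cancel_left]
  have hrlt : ∀ i < n1 + n2, r i < r (i+1) := by
    intro i hi
    rcases Nat.lt_or_ge (i+1) n1 with h | h
    · rw [hr1 i (by omega), hr1 (i+1) (by omega)]
      exact UP_lt a s m1 has i (by omega)
    rcases Nat.lt_or_ge i n1 with h' | h'
    · have e : i + 1 = n1 := by omega
      have eq2 : r (i+1) = P (i+1) := by rw [e]; exact hr1 n1 le_rfl
      rw [hr1 i (by omega), eq2]
      exact UP_lt a s m1 has i (by omega)
    · have e1 : r i = Q (i - n1) := by simp only [hr]; rw [if_neg (by omega)]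
      have e2 : r (i+1) = Q (i - n1 + 1) := by
        simp only [hr]; rw [if_neg (by omega)]; congr 1; omega
      rw [e1, e2]
      exact UP_lt s t m2 hst (i - n1) (by omega)
  have hrδ : ∀ i < n1 + n2, r (i+1) - r i < min δ1 δ2 := by
    intro i hi
    rcases Nat.lt_or_ge (i+1) n1 with h | h
    · rw [hr1 i (by omega), hr1 (i+1) (by omega), hP, UP_gap]; exact hm1
    rcases Nat.lt_or_ge i n1 with h' | h'
    · have e : i + 1 = n1 := by omega
      have eq2 : r (i+1) = P (i+1) := by rw [e]; exact hr1 n1 le_rfl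
      rw [hr1 i (by omega), eq2, hP, UP_gap]; exact hm1
    · have e1 : r i = Q (i - n1) := by simp only [hr]; rw [if_neg (by omega)]
      have e2 : r (i+1) = Q (i - n1 + 1) := by
        simp only [hr]; rw [if_neg (by omega)]; congr 1; omega
      rw [e1, e2, hQ, UP_gap]; exact hm2
  have hr0 : r 0 = a := by rw [hr1 0 (by omega), hP, UP_zero]
  have hrtop : r (n1 + n2) = t := by
    rw [hr2 n2 (by omega) le_rfl, hQ, hn2, UP_top]
  have hS2 := h2 (n1+n2) r hr0 hrtop hrlt
    (fun i hi => lt_of_lt_of_le (hrδ i hi) (min_le_right _ _))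
  have hS1 := h1 n1 P (by rw [hP, UP_zero]) (by rw [hP, hn1, UP_top]) (UP_lt a s m1 has)
    (by intro i hi; rw [hP, UP_gap]; exact lt_of_lt_of_le hm1 (min_le_left _ _))
  simp only [smul_eq_mul, Real.norm_eq_abs] at hS1 hS2
  have hsplit := concat_sum f g P Q r n1 n2 hglue hr1 hr2
  have hQmem : ∀ i ≤ n2, Q i ∈ Icc A B := by
    intro i hi
    constructor
    · have hh := part_mono_le (UP_lt s t m2 hst) 0 i (Nat.zero_le i) (by omega)
      rw [show UP s t m2 0 = s from UP_zero s t m2] at hh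
      rw [hQ]; linarith
    · have hh := part_mono_le (UP_lt s t m2 hst) i (m2+1) (by omega) le_rfl
      rw [show UP s t m2 (m2+1) = t from UP_top s t m2] at hh
      rw [hQ]; linarith
  have hQb := keyA2 f g lam β Kf Kg A B hβ0 hlam0 hsum hKf hKg hf hg
    n2 (by omega) Q (UP_lt s t m2 hst) hQmem
  rw [show Q n2 = t by rw [hQ, hn2, UP_top], show Q 0 = s by rw [hQ, UP_zero]] at hQb
  rw [hsplit] at hS2
  set SP := ∑ i ∈ Finset.range n1, (g (P (i+1)) - g (P i)) * f (P i) with hSP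
  set SQ := ∑ i ∈ Finset.range n2, (g (Q (i+1)) - g (Q i)) * f (Q i) with hSQ
  have key : It - Is - (g t - g s) * f s
      = -(SP + SQ - It) + (SP - Is) + (SQ - (g t - g s) * f s) := by ring
  calc |It - Is - (g t - g s) * f s|
      ≤ |SP + SQ - It| + |SP - Is| + |SQ - (g t - g s) * f s| := by
        rw [key]
        refine le_trans (abs_add_le _ _) ?_
        have h6 : |-(SP + SQ - It) + (SP - Is)| ≤ |SP + SQ - It| + |SP - Is| := by
          refine le_trans (abs_add_le _ _) ?_
          rw [abs_neg]
        linarith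
    _ ≤ CC (lam+β) * Kf * Kg * (t - s) ^ (lam+β) + ε := by linarith

lemma holderNorm_nn (x : ℝ → ℝ) (a b β : ℝ) : 0 ≤ holderNorm x a b β := by
  apply Real.iSup_nonneg
  intro q
  apply div_nonneg (norm_nonneg _)
  apply Real.rpow_nonneg
  have := q.2.2.1
  linarith [q.2.2.1]

lemma holder_two_point (f : ℝ → ℝ) (a b lam : ℝ) (hab : a < b) (hlam0 : 0 < lam)
    (h : HolderOn f a b lam) :
    ∀ s ∈ Icc a b, ∀ t ∈ Icc a b, s ≤ t →
      |f t - f s| ≤ holderNorm f a b lam * (t - s) ^ lam := by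
  obtain ⟨Cb, hCb⟩ := h
  have hbdd : BddAbove (Set.range fun q : {q : ℝ × ℝ // a ≤ q.1 ∧ q.1 < q.2 ∧ q.2 ≤ b} =>
      ‖f q.1.2 - f q.1.1‖ / (q.1.2 - q.1.1) ^ lam) := by
    refine ⟨max Cb 0, ?_⟩
    rintro x ⟨q, rfl⟩
    obtain ⟨h1, h2, h3⟩ := q.2
    have hpos : (0:ℝ) < (q.1.2 - q.1.1) ^ lam := Real.rpow_pos_of_pos (by linarith) _
    rw [div_le_iff₀ hpos]
    have hb := hCb q.1.1 ⟨h1, by linarith⟩ q.1.2 ⟨by linarith, h3⟩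
    rw [abs_of_pos (by linarith : (0:ℝ) < q.1.2 - q.1.1)] at hb
    calc ‖f q.1.2 - f q.1.1‖ ≤ Cb * (q.1.2 - q.1.1) ^ lam := hb
      _ ≤ max Cb 0 * (q.1.2 - q.1.1) ^ lam :=
          mul_le_mul_of_nonneg_right (le_max_left _ _) hpos.le
  intro s hs t ht hst
  rcases eq_or_lt_of_le hst with h | h
  · subst h
    simp [Real.zero_rpow (ne_of_gt hlam0)]
  · have hle : ‖f t - f s‖ / (t - s) ^ lam ≤ holderNorm f a b lam := by
      exact le_ciSup hbdd (⟨(s,t), hs.1, h, ht.2⟩ :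
        {q : ℝ × ℝ // a ≤ q.1 ∧ q.1 < q.2 ∧ q.2 ≤ b})
    rw [Real.norm_eq_abs, div_le_iff₀ (Real.rpow_pos_of_pos (by linarith) lam)] at hle
    exact hle

lemma supNorm_ge (f : ℝ → ℝ) (a b lam : ℝ) (hab : a < b) (hlam0 : 0 < lam)
    (h : HolderOn f a b lam) :
    ∀ t ∈ Icc a b, |f t| ≤ supNorm f a b := by
  obtain ⟨Cb, hCb⟩ := h
  have hbdd : BddAbove (Set.range fun t : Icc a b => ‖f t‖) := by
    refine ⟨‖f a‖ + |Cb| * (b - a) ^ lam, ?_⟩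
    rintro x ⟨t, rfl⟩
    show ‖f (↑t : ℝ)‖ ≤ ‖f a‖ + |Cb| * (b - a) ^ lam
    obtain ⟨h1, h2⟩ := t.2
    have hd := hCb a ⟨le_rfl, hab.le⟩ t ⟨h1, h2⟩
    rw [Real.norm_eq_abs (f ↑t - f a)] at hd
    have h3 : |(t:ℝ) - a| ^ lam ≤ (b - a) ^ lam :=
      Real.rpow_le_rpow (abs_nonneg _) (by rw [abs_of_nonneg (by linarith)]; linarith) hlam0.le
    have h4 : Cb * |(t:ℝ) - a| ^ lam ≤ |Cb| * (b - a) ^ lam := by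
      calc Cb * |(t:ℝ)-a| ^ lam ≤ |Cb| * |(t:ℝ)-a| ^ lam :=
            mul_le_mul_of_nonneg_right (le_abs_self _) (by positivity)
        _ ≤ |Cb| * (b-a) ^ lam := mul_le_mul_of_nonneg_left h3 (abs_nonneg _)
    have h5 : ‖f ↑t‖ ≤ ‖f a‖ + ‖f ↑t - f a‖ := by
      simp only [Real.norm_eq_abs]
      have := abs_add_le (f a) (f ↑t - f a)
      simpa using this
    rw [Real.norm_eq_abs (f ↑t - f a)] at h5
    rw [Real.norm_eq_abs (f ↑t)] at h5 ⊢
    linarith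
  intro t ht
  have hle := le_ciSup hbdd (⟨t, ht⟩ : Icc a b)
  rw [Real.norm_eq_abs] at hle
  exact hle

theorem young_integral_holder_bound
    (β lam : ℝ) (hβ0 : 0 < β) (hβ1 : β ≤ 1) (hlam0 : 0 < lam) (hlam1 : lam ≤ 1)
    (hsum : 1 < lam + β) :
    ∃ C : ℝ, ∀ a b : ℝ, 0 ≤ a → a < b →
      ∀ f g : ℝ → ℝ, HolderOn f a b lam → HolderOn g a b β →
        (∃ I : ℝ, IsYoungIntegral f g a b I ∧
          |I| ≤ C * holderNorm g a b β *
            (supNorm f a b * (b - a) ^ β + holderNorm f a b lam * (b - a) ^ (lam + β))) ∧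
        holderNorm (fun t => youngIntegral f g a t) a b β ≤
          C * holderNorm g a b β * (supNorm f a b + holderNorm f a b lam * (b - a) ^ lam) := by
  refine ⟨CC (lam+β) + 1, ?_⟩
  intro a b ha hab f g hfH hgH
  set Kf := holderNorm f a b lam with hKfdef
  set Kg := holderNorm g a b β with hKgdef
  set M := supNorm f a b with hMdef
  have hKf : 0 ≤ Kf := holderNorm_nn f a b lam
  have hKg : 0 ≤ Kg := holderNorm_nn g a b β
  have hM0 : 0 ≤ M := Real.iSup_nonneg (fun t => norm_nonneg _)
  have hf := holder_two_point f a b lam hab hlam0 hfH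
  have hg := holder_two_point g a b β hab hβ0 hgH
  have hM := supNorm_ge f a b lam hab hlam0 hfH
  have hCC := CC_nonneg (lam+β)
  have hab' : (0:ℝ) ≤ b - a := by linarith
  have hpow1 : (0:ℝ) ≤ (b-a) ^ β := Real.rpow_nonneg hab' _
  have hpow2 : (0:ℝ) ≤ (b-a) ^ (lam+β) := Real.rpow_nonneg hab' _
  have hpowl : (0:ℝ) ≤ (b-a) ^ lam := Real.rpow_nonneg hab' _
  constructor
  · obtain ⟨I, hI⟩ := existsYoung f g lam β Kf Kg a b hβ0 hlam0 hsum hKf hKg hf hg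
      a b hab le_rfl le_rfl
    refine ⟨I, hI, ?_⟩
    have hIb := youngBound f g lam β Kf Kg a b hβ0 hlam0 hsum hKf hKg hf hg
      a b I hab le_rfl le_rfl hI
    have hga : |g b - g a| ≤ Kg * (b-a) ^ β := hg a ⟨le_rfl, hab.le⟩ b ⟨hab.le, le_rfl⟩ hab.le
    have hfa : |f a| ≤ M := hM a ⟨le_rfl, hab.le⟩
    have h1 : |I| ≤ |(g b - g a) * f a| + |I - (g b - g a) * f a| := by
      have := abs_add_le ((g b - g a) * f a) (I - (g b - g a) * f a)
      simpa using this
    rw [abs_mul] at h1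
    have h2 : |g b - g a| * |f a| ≤ (Kg * (b-a) ^ β) * M :=
      mul_le_mul hga hfa (abs_nonneg _) (by positivity)
    have expand : (CC (lam+β)+1) * Kg * (M * (b-a) ^ β + Kf * (b-a) ^ (lam+β))
        = (Kg * (b-a) ^ β) * M + CC (lam+β) * Kf * Kg * (b-a) ^ (lam+β)
          + (CC (lam+β) * (Kg * (M * (b-a) ^ β)) + Kg * (Kf * (b-a) ^ (lam+β))) := by
      ring
    have hnn1 : 0 ≤ CC (lam+β) * (Kg * (M * (b-a) ^ β)) :=
      mul_nonneg hCC (mul_nonneg hKg (mul_nonneg hM0 hpow1))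
    have hnn2 : 0 ≤ Kg * (Kf * (b-a) ^ (lam+β)) :=
      mul_nonneg hKg (mul_nonneg hKf hpow2)
    rw [expand]
    linarith
  · have hNE : Nonempty {q : ℝ × ℝ // a ≤ q.1 ∧ q.1 < q.2 ∧ q.2 ≤ b} :=
      ⟨⟨(a,b), le_rfl, hab, le_rfl⟩⟩
    rw [holderNorm]
    refine ciSup_le ?_
    rintro ⟨⟨s,t⟩, hs, hst, ht⟩
    dsimp only at hs hst ht
    show ‖youngIntegral f g a t - youngIntegral f g a s‖ / (t - s) ^ β
      ≤ (CC (lam+β)+1) * Kg * (M + Kf * (b-a) ^ lam)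
    rw [Real.norm_eq_abs]
    have hat : a < t := lt_of_le_of_lt hs hst
    have hkey : |youngIntegral f g a t - youngIntegral f g a s|
        ≤ (M * Kg + CC (lam+β) * Kf * Kg * (b-a) ^ lam) * (t-s) ^ β := by
      have hext : ∃ I, IsYoungIntegral f g a t I := existsYoung f g lam β Kf Kg a b
        hβ0 hlam0 hsum hKf hKg hf hg a t hat le_rfl ht
      have hYt := youngIntegral_isYoung f g a t hext
      have hgs : |g t - g s| ≤ Kg * (t-s) ^ β := hg s ⟨hs, by linarith⟩ t ⟨by linarith, ht⟩ hst.le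
      have hfs : |f s| ≤ M := hM s ⟨hs, by linarith⟩
      have hsplit : (t-s) ^ (lam+β) = (t-s) ^ lam * (t-s) ^ β :=
        Real.rpow_add (by linarith) lam β
      have hmono : (t-s) ^ lam ≤ (b-a) ^ lam :=
        Real.rpow_le_rpow (by linarith) (by linarith) hlam0.le
      have hbase : |youngIntegral f g a t - youngIntegral f g a s - (g t - g s) * f s|
          ≤ CC (lam+β) * Kf * Kg * (t-s) ^ (lam+β) := by
        rcases eq_or_lt_of_le hs with hsa | hsa
        · have hz : youngIntegral f g a s = 0 := by rw [← hsa]; exact youngIntegral_self f g a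
          rw [hz, sub_zero]
          have hb2 := youngBound f g lam β Kf Kg a b hβ0 hlam0 hsum hKf hKg hf hg
            a t (youngIntegral f g a t) hat le_rfl ht hYt
          rw [← hsa]
          exact hb2
        · have hexs : ∃ I, IsYoungIntegral f g a s I := existsYoung f g lam β Kf Kg a b
            hβ0 hlam0 hsum hKf hKg hf hg a s hsa le_rfl (by linarith)
          have hYs := youngIntegral_isYoung f g a s hexs
          exact young_incr f g lam β Kf Kg a b hβ0 hlam0 hsum hKf hKg hf hg
            a s t hsa hst le_rfl ht _ _ hYs hYt
      have htri : |youngIntegral f g a t - youngIntegral f g a s|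
          ≤ |(g t - g s) * f s|
            + |youngIntegral f g a t - youngIntegral f g a s - (g t - g s) * f s| := by
        have := abs_add_le ((g t - g s) * f s)
          (youngIntegral f g a t - youngIntegral f g a s - (g t - g s) * f s)
        simpa using this
      rw [abs_mul] at htri
      have h2 : |g t - g s| * |f s| ≤ Kg * (t-s) ^ β * M :=
        mul_le_mul hgs hfs (abs_nonneg _) (mul_nonneg hKg (Real.rpow_nonneg (by linarith) _))
      have hCKnn : 0 ≤ CC (lam+β) * Kf * Kg := mul_nonneg (mul_nonneg hCC hKf) hKg
      have h3 : CC (lam+β) * Kf * Kg * (t-s) ^ (lam+β)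
          ≤ CC (lam+β) * Kf * Kg * (b-a) ^ lam * (t-s) ^ β := by
        rw [hsplit]
        calc CC (lam+β) * Kf * Kg * ((t-s) ^ lam * (t-s) ^ β)
            ≤ CC (lam+β) * Kf * Kg * ((b-a) ^ lam * (t-s) ^ β) :=
              mul_le_mul_of_nonneg_left
                (mul_le_mul_of_nonneg_right hmono (Real.rpow_nonneg (by linarith) _)) hCKnn
          _ = CC (lam+β) * Kf * Kg * (b-a) ^ lam * (t-s) ^ β := by ring
      have expand2 : (M * Kg + CC (lam+β) * Kf * Kg * (b-a) ^ lam) * (t-s) ^ β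
          = Kg * (t-s) ^ β * M + CC (lam+β) * Kf * Kg * (b-a) ^ lam * (t-s) ^ β := by ring
      rw [expand2]
      linarith
    rw [div_le_iff₀ (Real.rpow_pos_of_pos (by linarith : (0:ℝ) < t - s) β)]
    refine le_trans hkey (mul_le_mul_of_nonneg_right ?_ (Real.rpow_nonneg (by linarith) _))
    have expand3 : (CC (lam+β)+1) * Kg * (M + Kf * (b-a) ^ lam)
        = M * Kg + CC (lam+β) * Kf * Kg * (b-a) ^ lam
          + (CC (lam+β) * (Kg * M) + Kg * (Kf * (b-a) ^ lam)) := by ring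
    have hnn3 : 0 ≤ CC (lam+β) * (Kg * M) := mul_nonneg hCC (mul_nonneg hKg hM0)
    have hnn4 : 0 ≤ Kg * (Kf * (b-a) ^ lam) := mul_nonneg hKg (mul_nonneg hKf hpowl)
    rw [expand3]
    linarith
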